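/- In the reproducing kernel Hilbert space H₀ on the unit disc with kernel K₀(z,w) = 1/(1 - (z·w̄)²), every function is even, the map g ↦ g(z²) is a unitary from H² onto H₀, and for r, t ∈ (0,1) the extremal value γ₀(t) = sup{|f(0)| : f ∈ H₀, f(-r) = f(t) = 0, ‖f‖ ≤ 1} equals r²t² if t ≠ r and equals r² if t = r. In particular γ₀ is discontinuous at t = r and not monotone increasing on (0,1). -/

import Mathlib

open scoped InnerProductSpace
open Filter Topology

section helpers15

lemma dense_kill15 {H : Type*} [NormedAddCommGroup H] [InnerProductSpace ℂ H] [CompleteSpace H]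
    (S : Set H) (hS : (Submodule.span ℂ S).topologicalClosure = ⊤)
    (x : H) (hx : ∀ u ∈ S, ⟪u, x⟫_ℂ = 0) : x = 0 := by
  have hmem : x ∈ (Submodule.span ℂ S)ᗮ := by
    rw [Submodule.mem_orthogonal]
    intro u hu
    induction hu using Submodule.span_induction with
    | mem u hu => exact hx u hu
    | zero => simp
    | add u v _ _ h1 h2 => rw [inner_add_left, h1, h2, add_zero]
    | smul c u _ h1 => rw [inner_smul_left, h1, mul_zero]
  rw [Submodule.topologicalClosure_eq_top_iff] at hS
  simpa [hS] using hmem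

lemma inner_linearCombination_expand15 {G : Type*} [NormedAddCommGroup G]
    [InnerProductSpace ℂ G] {ι : Type*} (u : ι → G) (c d : ι →₀ ℂ) :
    ⟪Finsupp.linearCombination ℂ u c, Finsupp.linearCombination ℂ u d⟫_ℂ
      = ∑ i ∈ c.support, ∑ j ∈ d.support,
          (starRingEnd ℂ) (c i) * d j * ⟪u i, u j⟫_ℂ := by
  rw [Finsupp.linearCombination_apply, Finsupp.linearCombination_apply,
    Finsupp.sum, Finsupp.sum, sum_inner]
  refine Finset.sum_congr rfl fun i _ => ?_
  rw [inner_sum]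
  refine Finset.sum_congr rfl fun j _ => ?_
  rw [inner_smul_left, inner_smul_right]; ring

lemma exists_isometry_equiv_of_kernel_match15
    {E F : Type*} [NormedAddCommGroup E] [InnerProductSpace ℂ E] [CompleteSpace E]
    [NormedAddCommGroup F] [InnerProductSpace ℂ F] [CompleteSpace F]
    {ι : Type*} (v : ι → E) (w : ι → F)
    (hspanE : (Submodule.span ℂ (Set.range v)).topologicalClosure = ⊤)
    (hspanF : (Submodule.span ℂ (Set.range w)).topologicalClosure = ⊤)
    (hmatch : ∀ i j, ⟪v i, v j⟫_ℂ = ⟪w i, w j⟫_ℂ) :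
    ∃ T : E ≃ₗᵢ[ℂ] F, ∀ i, T (v i) = w i := by
  classical
  set L1 : (ι →₀ ℂ) →ₗ[ℂ] E := Finsupp.linearCombination ℂ v with hL1
  set L2 : (ι →₀ ℂ) →ₗ[ℂ] F := Finsupp.linearCombination ℂ w with hL2
  have key : ∀ c d : ι →₀ ℂ, ⟪L1 c, L1 d⟫_ℂ = ⟪L2 c, L2 d⟫_ℂ := by
    intro c d
    rw [hL1, hL2, inner_linearCombination_expand15 v c d,
      inner_linearCombination_expand15 w c d]
    exact Finset.sum_congr rfl fun i _ => Finset.sum_congr rfl fun j _ => by rw [hmatch]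
  have hker : LinearMap.ker L1 ≤ LinearMap.ker L2 := by
    intro c hc
    rw [LinearMap.mem_ker] at hc ⊢
    rw [← inner_self_eq_zero (𝕜 := ℂ), ← key, hc, inner_zero_right]
  set p : Submodule ℂ E := LinearMap.range L1 with hp
  have hprange : p = Submodule.span ℂ (Set.range v) := by
    rw [hp, hL1, Finsupp.range_linearCombination]
  set Q : ((ι →₀ ℂ) ⧸ LinearMap.ker L1) →ₗ[ℂ] F := Submodule.liftQ _ L2 hker with hQ
  set Φ := LinearMap.quotKerEquivRange L1 with hΦ
  set T0 : p →ₗ[ℂ] F := Q.comp (Φ.symm.toLinearMap) with hT0def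
  have hT0 : ∀ c : ι →₀ ℂ, T0 ⟨L1 c, LinearMap.mem_range_self L1 c⟩ = L2 c := by
    intro c
    have h1 : Φ (Submodule.Quotient.mk c) = ⟨L1 c, LinearMap.mem_range_self L1 c⟩ :=
      Subtype.ext (LinearMap.quotKerEquivRange_apply_mk L1 c)
    have h2 : Φ.symm ⟨L1 c, LinearMap.mem_range_self L1 c⟩ = Submodule.Quotient.mk c := by
      rw [LinearEquiv.symm_apply_eq, h1]
    rw [hT0def]
    simp only [LinearMap.comp_apply, LinearEquiv.coe_toLinearMap, h2, hQ,
      Submodule.liftQ_apply]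
  have hT0iso : ∀ x : p, ‖T0 x‖ = ‖x‖ := by
    rintro ⟨x, hx⟩
    obtain ⟨c, rfl⟩ := hx
    rw [hT0 c]
    have h1 : ⟪L2 c, L2 c⟫_ℂ = ⟪L1 c, L1 c⟫_ℂ := (key c c).symm
    have h2 : ‖L2 c‖ = ‖L1 c‖ := by
      rw [@norm_eq_sqrt_re_inner ℂ, @norm_eq_sqrt_re_inner ℂ, h1]
    simpa using h2
  set TI : p →ₗᵢ[ℂ] F := ⟨T0, hT0iso⟩ with hTI
  set e : p →L[ℂ] E := p.subtypeL with he
  have hei : Isometry (⇑e) := isometry_subtype_coe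
  have h_e : IsUniformInducing (⇑e) := hei.isUniformInducing
  have hdense : Dense (p : Set E) := by
    have := hspanE
    rw [← hprange] at this
    rw [← Submodule.dense_iff_topologicalClosure_eq_top] at this
    exact this
  have h_dense : DenseRange (⇑e) := by
    have : Set.range (⇑e) = (p : Set E) := Subtype.range_coe
    rw [DenseRange, this]
    exact hdense
  set T : E →L[ℂ] F := ContinuousLinearMap.extend TI.toContinuousLinearMap e with hT
  have hTe : ∀ x : p, T x = T0 x := by
    intro x
    have := ContinuousLinearMap.extend_eq TI.toContinuousLinearMap h_dense h_e x
    exact this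
  have hTiso : ∀ y : E, ‖T y‖ = ‖y‖ := by
    have hfun : (fun y : E => ‖T y‖) = fun y : E => ‖y‖ := by
      refine Continuous.ext_on hdense (T.continuous.norm) continuous_norm ?_
      rintro y hy
      have := hTe ⟨y, hy⟩
      simp only [this, hT0iso]
      rfl
    intro y; exact congrFun hfun y
  set TL : E →ₗᵢ[ℂ] F := ⟨(T : E →ₗ[ℂ] F), hTiso⟩ with hTL
  have hTLv : ∀ i, TL (v i) = w i := by
    intro i
    have hv : v i = L1 (Finsupp.single i 1) := by
      rw [hL1, Finsupp.linearCombination_single, one_smul]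
    have hw : w i = L2 (Finsupp.single i 1) := by
      rw [hL2, Finsupp.linearCombination_single, one_smul]
    have hmem : v i ∈ p := hv ▸ LinearMap.mem_range_self L1 _
    have : TL (v i) = T0 ⟨v i, hmem⟩ := hTe ⟨v i, hmem⟩
    rw [this, hw]
    have : (⟨v i, hmem⟩ : p) = ⟨L1 (Finsupp.single i 1), LinearMap.mem_range_self L1 _⟩ :=
      Subtype.ext hv
    rw [this, hT0 (Finsupp.single i 1)]
  have hsurj : Function.Surjective TL := by
    have hclosed : IsClosed (Set.range (⇑TL)) :=
      (TL.isometry.isClosedEmbedding).isClosed_range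
    have hle : Submodule.span ℂ (Set.range w) ≤ LinearMap.range TL.toLinearMap := by
      rw [Submodule.span_le]
      rintro _ ⟨i, rfl⟩
      exact ⟨v i, hTLv i⟩
    have htop : (LinearMap.range TL.toLinearMap).topologicalClosure = ⊤ := by
      refine top_le_iff.mp ?_
      rw [← hspanF]
      exact Submodule.topologicalClosure_mono hle
    have hsetr : (LinearMap.range TL.toLinearMap : Set F) = Set.range (⇑TL) := by
      ext y; exact ⟨fun ⟨z, h⟩ => ⟨z, h⟩, fun ⟨z, h⟩ => ⟨z, h⟩⟩
    have hclosed' : IsClosed ((LinearMap.range TL.toLinearMap : Set F)) := hsetr ▸ hclosed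
    have hcl : (LinearMap.range TL.toLinearMap).topologicalClosure
        = LinearMap.range TL.toLinearMap :=
      hclosed'.submodule_topologicalClosure_eq
    rw [hcl] at htop
    intro y
    have : y ∈ LinearMap.range TL.toLinearMap := htop ▸ Submodule.mem_top
    exact this
  refine ⟨LinearIsometryEquiv.ofSurjective TL hsurj, fun i => ?_⟩
  show (LinearIsometryEquiv.ofSurjective TL hsurj) (v i) = w i
  rw [LinearIsometryEquiv.coe_ofSurjective]
  exact hTLv i

end helpers15

/-- In the RKHS H₀ on 𝔻 with kernel K₀(z,w) = 1/(1-(z w̄)²): every function is even,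
g ↦ g(z²) is a unitary from H² (kernel 1/(1-z w̄)) onto H₀, and for r ∈ (0,1) the
two-point extremal value γ₀(t) at {-r, t} equals r²t² for t ≠ r and r² for t = r;
in particular γ₀ is discontinuous at t = r and not monotone increasing on (0,1). -/
theorem stmt15
    {H2 H0 : Type*} [NormedAddCommGroup H2] [InnerProductSpace ℂ H2] [CompleteSpace H2]
    [NormedAddCommGroup H0] [InnerProductSpace ℂ H0] [CompleteSpace H0]
    (ev2 : H2 →ₗ[ℂ] (ℂ → ℂ)) (k2 : ℂ → H2)
    (hrep2 : ∀ (f : H2) (z : ℂ), ‖z‖ < 1 → ev2 f z = ⟪k2 z, f⟫_ℂ)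
    (hK2 : ∀ z w : ℂ, ‖z‖ < 1 → ‖w‖ < 1 →
      ev2 (k2 w) z = 1 / (1 - z * (starRingEnd ℂ) w))
    (hspan2 : (Submodule.span ℂ (k2 '' Metric.ball 0 1)).topologicalClosure = ⊤)
    (ev0 : H0 →ₗ[ℂ] (ℂ → ℂ)) (k0 : ℂ → H0)
    (hrep0 : ∀ (f : H0) (z : ℂ), ‖z‖ < 1 → ev0 f z = ⟪k0 z, f⟫_ℂ)
    (hK0 : ∀ z w : ℂ, ‖z‖ < 1 → ‖w‖ < 1 →
      ev0 (k0 w) z = 1 / (1 - (z * (starRingEnd ℂ) w) ^ 2))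
    (hspan0 : (Submodule.span ℂ (k0 '' Metric.ball 0 1)).topologicalClosure = ⊤)
    (r : ℝ) (hr : r ∈ Set.Ioo (0 : ℝ) 1)
    (γ : ℝ → ℝ)
    (hγ : ∀ t : ℝ, γ t = sSup {x : ℝ | ∃ f : H0, ‖f‖ ≤ 1 ∧
      ev0 f (-(r : ℂ)) = 0 ∧ ev0 f (t : ℂ) = 0 ∧ x = ‖ev0 f 0‖}) :
    (∀ (f : H0) (z : ℂ), ‖z‖ < 1 → ev0 f (-z) = ev0 f z) ∧
    (∃ U : H2 ≃ₗᵢ[ℂ] H0, ∀ (g : H2) (z : ℂ), ‖z‖ < 1 →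
      ev0 (U g) z = ev2 g (z ^ 2)) ∧
    (∀ t ∈ Set.Ioo (0 : ℝ) 1, γ t = if t = r then r ^ 2 else r ^ 2 * t ^ 2) ∧
    ¬ ContinuousWithinAt γ (Set.Ioo 0 1) r ∧
    ¬ MonotoneOn γ (Set.Ioo (0 : ℝ) 1) := by
  obtain ⟨hr0, hr1⟩ := hr
  have hkk0 : ∀ z w : ℂ, ‖z‖ < 1 → ‖w‖ < 1 →
      ⟪k0 z, k0 w⟫_ℂ = 1 / (1 - (z * (starRingEnd ℂ) w) ^ 2) := fun z w hz hw => by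
    rw [← hrep0 (k0 w) z hz, hK0 z w hz hw]
  have hkk2 : ∀ z w : ℂ, ‖z‖ < 1 → ‖w‖ < 1 →
      ⟪k2 z, k2 w⟫_ℂ = 1 / (1 - z * (starRingEnd ℂ) w) := fun z w hz hw => by
    rw [← hrep2 (k2 w) z hz, hK2 z w hz hw]
  -- Part 1: evenness
  have hk0even : ∀ z : ℂ, ‖z‖ < 1 → k0 (-z) = k0 z := by
    intro z hz
    have hzneg : ‖-z‖ < 1 := by simpa using hz
    have h0 : k0 (-z) - k0 z = 0 := by
      apply dense_kill15 _ hspan0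
      rintro u ⟨ζ, hζ, rfl⟩
      rw [Metric.mem_ball, dist_zero_right] at hζ
      rw [inner_sub_right, hkk0 ζ (-z) hζ hzneg, hkk0 ζ z hζ hz]
      rw [map_neg]
      ring_nf
    exact sub_eq_zero.mp h0
  have heven : ∀ (f : H0) (z : ℂ), ‖z‖ < 1 → ev0 f (-z) = ev0 f z := by
    intro f z hz
    have hzneg : ‖-z‖ < 1 := by simpa using hz
    rw [hrep0 f (-z) hzneg, hrep0 f z hz, hk0even z hz]
  refine ⟨heven, ?_, ?_⟩
  -- Part 2: the unitary
  · have hsq : ∀ z : ℂ, ‖z‖ < 1 → ‖z ^ 2‖ < 1 := by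
      intro z hz
      rw [norm_pow]
      exact pow_lt_one₀ (norm_nonneg z) hz (by norm_num)
    obtain ⟨T, hT⟩ := exists_isometry_equiv_of_kernel_match15
        (fun z : Metric.ball (0:ℂ) 1 => k0 z) (fun z : Metric.ball (0:ℂ) 1 => k2 ((z:ℂ) ^ 2))
        (by rw [← Set.image_eq_range]; exact hspan0)
        (by
          have : Set.range (fun z : Metric.ball (0:ℂ) 1 => k2 ((z:ℂ) ^ 2))
              = k2 '' Metric.ball 0 1 := by
            ext y
            constructor
            · rintro ⟨⟨z, hz⟩, rfl⟩
              rw [Metric.mem_ball, dist_zero_right] at hz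
              exact ⟨z ^ 2, by
                rw [Metric.mem_ball, dist_zero_right]
                exact hsq z hz, rfl⟩
            · rintro ⟨u, hu, rfl⟩
              rw [Metric.mem_ball, dist_zero_right] at hu
              obtain ⟨z, hz⟩ := IsAlgClosed.exists_pow_nat_eq u (n := 2) (by norm_num)
              have hzlt : ‖z‖ < 1 := by
                have h2 : ‖z‖ ^ 2 < 1 := by
                  rw [← norm_pow, hz]; exact hu
                nlinarith [norm_nonneg z]
              exact ⟨⟨z, by rwa [Metric.mem_ball, dist_zero_right]⟩,
                by simp [hz]⟩
          rw [this]; exact hspan2)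
        (by
          rintro ⟨z, hz⟩ ⟨z', hz'⟩
          rw [Metric.mem_ball, dist_zero_right] at hz hz'
          rw [hkk0 z z' hz hz', hkk2 (z ^ 2) (z' ^ 2) (hsq z hz) (hsq z' hz')]
          rw [map_pow, mul_pow])
    refine ⟨T.symm, fun g z hz => ?_⟩
    rw [hrep0 _ z hz, hrep2 g (z ^ 2) (hsq z hz)]
    calc ⟪k0 z, T.symm g⟫_ℂ = ⟪T (k0 z), T (T.symm g)⟫_ℂ :=
          (LinearIsometryEquiv.inner_map_map T _ _).symm
      _ = ⟪k2 (z ^ 2), g⟫_ℂ := by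
          rw [hT ⟨z, by rwa [Metric.mem_ball, dist_zero_right]⟩,
            T.apply_symm_apply]
  -- Part 3-5
  have hrabs : ‖-(r : ℂ)‖ < 1 := by
    have h : ‖-(r : ℂ)‖ = |r| := by
      rw [norm_neg, Complex.norm_real, Real.norm_eq_abs]
    rw [h, abs_of_pos hr0]; exact hr1
  have h0abs : ‖(0 : ℂ)‖ < 1 := by simp
  -- the main extremal computation
  have main : ∀ t : ℝ, 0 < t → t < 1 → ∀ c₁ c₂ : ℂ, ∀ V : ℝ, 0 < V →
      ((1:ℂ) - c₁ * (1 / (1 - (r:ℂ)^4)) - c₂ * (1 / (1 - (r:ℂ)^2 * (t:ℂ)^2)) = 0) →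
      ((1:ℂ) - c₁ * (1 / (1 - (r:ℂ)^2 * (t:ℂ)^2)) - c₂ * (1 / (1 - (t:ℂ)^4)) = 0) →
      ((1:ℂ) - c₁ - c₂ = ((V^2 : ℝ) : ℂ)) →
      IsGreatest {x : ℝ | ∃ f : H0, ‖f‖ ≤ 1 ∧ ev0 f (-(r:ℂ)) = 0 ∧ ev0 f (t:ℂ) = 0 ∧
        x = ‖ev0 f 0‖} V := by
    intro t ht0 ht1 c₁ c₂ V hV h1 h2 h3
    have htabs : ‖(t : ℂ)‖ < 1 := by
      rw [Complex.norm_real, Real.norm_eq_abs, abs_of_pos ht0]; exact ht1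
    -- kernel values
    have e1 : ev0 (k0 (-(r:ℂ))) (-(r:ℂ)) = 1 / (1 - (r:ℂ)^4) := by
      rw [hK0 _ _ hrabs hrabs, map_neg, Complex.conj_ofReal]; ring_nf
    have e2 : ev0 (k0 ((t:ℂ))) (-(r:ℂ)) = 1 / (1 - (r:ℂ)^2 * (t:ℂ)^2) := by
      rw [hK0 _ _ hrabs htabs, Complex.conj_ofReal]; ring_nf
    have e3 : ev0 (k0 (-(r:ℂ))) ((t:ℂ)) = 1 / (1 - (r:ℂ)^2 * (t:ℂ)^2) := by
      rw [hK0 _ _ htabs hrabs, map_neg, Complex.conj_ofReal]; ring_nf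
    have e4 : ev0 (k0 ((t:ℂ))) ((t:ℂ)) = 1 / (1 - (t:ℂ)^4) := by
      rw [hK0 _ _ htabs htabs, Complex.conj_ofReal]; ring_nf
    have e5 : ∀ z : ℂ, ‖z‖ < 1 → ev0 (k0 0) z = 1 := by
      intro z hz; rw [hK0 _ _ hz h0abs]; simp
    have e6 : ∀ w : ℂ, ‖w‖ < 1 → ev0 (k0 w) 0 = 1 := by
      intro w hw; rw [hK0 _ _ h0abs hw]; simp
    set u : H0 := k0 0 - c₁ • k0 (-(r:ℂ)) - c₂ • k0 ((t:ℂ)) with hu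
    have hev : ∀ z : ℂ, ev0 u z
        = ev0 (k0 0) z - c₁ * ev0 (k0 (-(r:ℂ))) z - c₂ * ev0 (k0 ((t:ℂ))) z := by
      intro z
      rw [hu]
      simp only [map_sub, map_smul, Pi.sub_apply, Pi.smul_apply, smul_eq_mul]
    have hu1 : ev0 u (-(r:ℂ)) = 0 := by
      rw [hev, e5 _ hrabs, e1, e2]; exact h1
    have hu2 : ev0 u ((t:ℂ)) = 0 := by
      rw [hev, e5 _ htabs, e3, e4]; exact h2
    have hu0 : ev0 u 0 = ((V^2 : ℝ) : ℂ) := by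
      rw [hev, e6 _ h0abs, e6 _ hrabs, e6 _ htabs, mul_one, mul_one]; exact h3
    have hexp : ∀ x : H0, ⟪u, x⟫_ℂ = ⟪k0 0, x⟫_ℂ
        - (starRingEnd ℂ) c₁ * ⟪k0 (-(r:ℂ)), x⟫_ℂ
        - (starRingEnd ℂ) c₂ * ⟪k0 ((t:ℂ)), x⟫_ℂ := by
      intro x
      rw [hu, inner_sub_left, inner_sub_left, inner_smul_left, inner_smul_left]
    have hinner : ⟪u, u⟫_ℂ = ((V^2 : ℝ) : ℂ) := by
      rw [hexp u, ← hrep0 u 0 h0abs, ← hrep0 u _ hrabs, ← hrep0 u _ htabs,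
        hu0, hu1, hu2, mul_zero, mul_zero, sub_zero, sub_zero]
    have hnorm : ‖u‖ = V := by
      have hsq : ‖u‖ ^ 2 = V ^ 2 := by
        rw [← inner_self_eq_norm_sq (𝕜 := ℂ) u, hinner]
        exact RCLike.ofReal_re _
      rw [← Real.sqrt_sq (norm_nonneg u), hsq, Real.sqrt_sq hV.le]
    constructor
    · -- V is attained
      refine ⟨((V⁻¹ : ℝ) : ℂ) • u, ?_, ?_, ?_, ?_⟩
      · rw [norm_smul, hnorm, Complex.norm_real, Real.norm_eq_abs,
          abs_of_pos (inv_pos.mpr hV), inv_mul_cancel₀ hV.ne']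
      · rw [map_smul, Pi.smul_apply, smul_eq_mul, hu1, mul_zero]
      · rw [map_smul, Pi.smul_apply, smul_eq_mul, hu2, mul_zero]
      · rw [map_smul, Pi.smul_apply, smul_eq_mul, hu0]
        have hcast : ((V⁻¹ : ℝ) : ℂ) * ((V ^ 2 : ℝ) : ℂ) = ((V⁻¹ * V ^ 2 : ℝ) : ℂ) := by
          push_cast; ring
        rw [hcast, Complex.norm_real, Real.norm_eq_abs, abs_of_pos (by positivity : (0:ℝ) < V⁻¹ * V ^ 2)]
        field_simp
    · -- V is an upper bound
      rintro x ⟨f, hf, hf1, hf2, rfl⟩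
      have hval : ev0 f 0 = ⟪u, f⟫_ℂ := by
        rw [hexp f, ← hrep0 f 0 h0abs, ← hrep0 f _ hrabs, ← hrep0 f _ htabs,
          hf1, hf2, mul_zero, mul_zero, sub_zero, sub_zero]
      rw [hval]
      calc ‖⟪u, f⟫_ℂ‖ ≤ ‖u‖ * ‖f‖ := norm_inner_le_norm u f
        _ ≤ V * 1 := by
            rw [hnorm]
            exact mul_le_mul_of_nonneg_left hf hV.le
        _ = V := mul_one V
  -- nonvanishing facts
  have hr4 : (1 : ℂ) - (r:ℂ)^4 ≠ 0 := by
    have h : (1 : ℝ) - r^4 ≠ 0 := by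
      have : (0:ℝ) < 1 - r^4 := by nlinarith [pow_lt_one₀ hr0.le hr1 (by norm_num : (4:ℕ) ≠ 0)]
      exact this.ne'
    intro hc
    apply h
    have : ((1 - r^4 : ℝ) : ℂ) = 0 := by push_cast; linear_combination hc
    exact_mod_cast this
  -- Part 3
  have hγval : ∀ t ∈ Set.Ioo (0 : ℝ) 1, γ t = if t = r then r ^ 2 else r ^ 2 * t ^ 2 := by
    rintro t ⟨ht0, ht1⟩
    rw [hγ t]
    by_cases hcase : t = r
    · subst hcase
      rw [if_pos rfl]
      refine IsGreatest.csSup_eq (main t hr0 hr1 ((1:ℂ) - (t:ℂ)^4) 0 (t^2) (by positivity)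
        ?_ ?_ ?_)
      · rw [zero_mul, sub_zero, mul_one_div, div_self hr4]
        ring
      · rw [zero_mul, sub_zero, mul_one_div]
        have : (t:ℂ)^2 * (t:ℂ)^2 = (t:ℂ)^4 := by ring
        rw [this, div_self hr4]
        ring
      · push_cast
        ring
    · rw [if_neg hcase]
      have htr : (t:ℂ)^2 - (r:ℂ)^2 ≠ 0 := by
        intro hc
        apply hcase
        have h2 : ((t^2 - r^2 : ℝ) : ℂ) = 0 := by push_cast; linear_combination hc
        have h3 : (t^2 - r^2 : ℝ) = 0 := by exact_mod_cast h2
        have h4 : t ^ 2 = r ^ 2 := by linarith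
        have h5 : |t| = |r| := (sq_eq_sq_iff_abs_eq_abs t r).mp h4
        rwa [abs_of_pos ht0, abs_of_pos hr0] at h5
      have ht4 : (1 : ℂ) - (t:ℂ)^4 ≠ 0 := by
        have h : (1 : ℝ) - t^4 ≠ 0 := by
          have : (0:ℝ) < 1 - t^4 := by nlinarith [pow_lt_one₀ ht0.le ht1 (by norm_num : (4:ℕ) ≠ 0)]
          exact this.ne'
        intro hc
        apply h
        have : ((1 - t^4 : ℝ) : ℂ) = 0 := by push_cast; linear_combination hc
        exact_mod_cast this
      have hrt : (1 : ℂ) - (r:ℂ)^2 * (t:ℂ)^2 ≠ 0 := by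
        have h : (1 : ℝ) - r^2 * t^2 ≠ 0 := by
          have : (0:ℝ) < 1 - r^2 * t^2 := by nlinarith [pow_lt_one₀ hr0.le hr1 (by norm_num : (2:ℕ) ≠ 0), pow_lt_one₀ ht0.le ht1 (by norm_num : (2:ℕ) ≠ 0), sq_nonneg r, sq_nonneg t]
          exact this.ne'
        intro hc
        apply h
        have : ((1 - r^2 * t^2 : ℝ) : ℂ) = 0 := by push_cast; linear_combination hc
        exact_mod_cast this
      refine IsGreatest.csSup_eq (main t ht0 ht1
        ((t:ℂ)^2 * (1 - (r:ℂ)^4) * (1 - (r:ℂ)^2*(t:ℂ)^2) / ((t:ℂ)^2 - (r:ℂ)^2))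
        ((r:ℂ)^2 * (1 - (t:ℂ)^4) * (1 - (r:ℂ)^2*(t:ℂ)^2) / ((r:ℂ)^2 - (t:ℂ)^2))
        (r^2 * t^2) (by positivity) ?_ ?_ ?_)
      · have hrt' : (r:ℂ)^2 - (t:ℂ)^2 ≠ 0 := fun hc => htr (by linear_combination -hc)
        have hh : (1:ℂ) - (t:ℂ)^2 * (r:ℂ)^2 ≠ 0 := by rw [mul_comm]; exact hrt
        field_simp
        ring
      · have hrt' : (r:ℂ)^2 - (t:ℂ)^2 ≠ 0 := fun hc => htr (by linear_combination -hc)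
        have hh : (1:ℂ) - (t:ℂ)^2 * (r:ℂ)^2 ≠ 0 := by rw [mul_comm]; exact hrt
        field_simp
        ring
      · have hrt' : (r:ℂ)^2 - (t:ℂ)^2 ≠ 0 := fun hc => htr (by linear_combination -hc)
        push_cast
        field_simp
        ring
  refine ⟨hγval, ?_, ?_⟩
  -- Part 4: discontinuity
  · intro hcont
    have hγr : γ r = r ^ 2 := by
      rw [hγval r ⟨hr0, hr1⟩, if_pos rfl]
    have hne : (𝓝[Set.Ioo (0:ℝ) r] r).NeBot := right_nhdsWithin_Ioo_neBot hr0
    have hsub : Set.Ioo (0:ℝ) r ⊆ Set.Ioo (0:ℝ) 1 := fun x hx =>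
      ⟨hx.1, lt_trans hx.2 hr1⟩
    have h1 : Filter.Tendsto γ (𝓝[Set.Ioo (0:ℝ) r] r) (𝓝 (r ^ 2)) := by
      rw [← hγr]
      exact (hcont.tendsto).mono_left (nhdsWithin_mono r hsub)
    have h2 : Filter.Tendsto γ (𝓝[Set.Ioo (0:ℝ) r] r) (𝓝 (r ^ 2 * r ^ 2)) := by
      have heq : ∀ x ∈ Set.Ioo (0:ℝ) r, γ x = r ^ 2 * x ^ 2 := by
        intro x hx
        rw [hγval x (hsub hx), if_neg (ne_of_lt hx.2)]
      have hbase : Filter.Tendsto (fun x : ℝ => r ^ 2 * x ^ 2)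
          (𝓝[Set.Ioo (0:ℝ) r] r) (𝓝 (r ^ 2 * r ^ 2)) := by
        apply Filter.Tendsto.mono_left _ nhdsWithin_le_nhds
        exact (continuous_const.mul (continuous_pow 2)).tendsto r
      refine hbase.congr' ?_
      filter_upwards [self_mem_nhdsWithin] with x hx
      exact (heq x hx).symm
    have huniq := tendsto_nhds_unique h1 h2
    have hpos : (0:ℝ) < 1 - r ^ 2 := by nlinarith
    nlinarith [mul_pos (mul_pos hr0 hr0) hpos]
  -- Part 5: not monotone
  · intro hmono
    set t2 : ℝ := (r + 1) / 2 with ht2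
    have hrt2 : r < t2 := by rw [ht2]; linarith
    have ht2mem : t2 ∈ Set.Ioo (0:ℝ) 1 := ⟨by rw [ht2]; linarith, by rw [ht2]; linarith⟩
    have hγr : γ r = r ^ 2 := by rw [hγval r ⟨hr0, hr1⟩, if_pos rfl]
    have hγt2 : γ t2 = r ^ 2 * t2 ^ 2 := by
      rw [hγval t2 ht2mem, if_neg (ne_of_gt hrt2)]
    have := hmono ⟨hr0, hr1⟩ ht2mem hrt2.le
    rw [hγr, hγt2] at this
    have hpos : (0:ℝ) < 1 - t2 ^ 2 := by nlinarith [ht2mem.1, ht2mem.2]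
    nlinarith [mul_pos (mul_pos hr0 hr0) hpos]
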